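/- Upper bound for IWCRE (residual analogue of Theorem 2.2): with η̄(x) = (1/F̄(x))·∫_x^∞ φ(y)·F̄(y) dy for x with F̄(x) > 0, one has IWCRE(t₁,t₂) ≤ E[η̄(X) | t₁ ≤ X ≤ t₂]. -/

import Mathlib

open MeasureTheory intervalIntegral

set_option maxHeartbeats 4000000 in
/-- Residual analogue of Theorem 2.2: upper bound for the IWCRE by the conditional
expectation of η̄(X) = (1/F̄(X))·∫_X^∞ φ(y)·F̄(y) dy given t₁ ≤ X ≤ t₂. -/
theorem iwcre_upper_bound
    (f φ F Fbar ηbar : ℝ → ℝ)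
    (hf_meas : Measurable f) (hf_nonneg : ∀ x, 0 ≤ f x)
    (hφ_meas : Measurable φ) (hφ_nonneg : ∀ x, 0 ≤ φ x)
    (hF : ∀ x, F x = ∫ s in (0:ℝ)..x, f s)
    (hFbar : ∀ x, Fbar x = 1 - F x)
    (hFbar_pos : ∀ x, 0 ≤ x → 0 < Fbar x)
    (hηbar : ∀ x, 0 ≤ x → ηbar x = (1 / Fbar x) * ∫ y in Set.Ioi x, φ y * Fbar y)
    (t₁ t₂ : ℝ) (ht₁ : 0 ≤ t₁) (ht : t₁ < t₂)
    (hF12 : F t₁ < F t₂)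
    (hi1 : IntervalIntegrable
      (fun x => φ x * (Fbar x / (Fbar t₁ - Fbar t₂)) *
        Real.log (Fbar x / (Fbar t₁ - Fbar t₂))) volume t₁ t₂)
    (hi2 : IntervalIntegrable (fun x => ηbar x * f x) volume t₁ t₂)
    (hi3 : ∀ x, 0 ≤ x → IntegrableOn (fun y => φ y * Fbar y) (Set.Ioi x) volume) :
    -∫ x in t₁..t₂, φ x * (Fbar x / (Fbar t₁ - Fbar t₂)) *
        Real.log (Fbar x / (Fbar t₁ - Fbar t₂))
      ≤ (∫ x in t₁..t₂, ηbar x * f x) / (F t₂ - F t₁) := by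
  have ht₂0 : (0:ℝ) ≤ t₂ := le_trans ht₁ ht.le
  set Δ : ℝ := Fbar t₁ - Fbar t₂ with hΔdef
  have hΔeq : Δ = F t₂ - F t₁ := by rw [hΔdef, hFbar, hFbar]; ring
  have hΔpos : 0 < Δ := by rw [hΔeq]; linarith
  have hc : 0 < Fbar t₂ := hFbar_pos t₂ ht₂0
  have hΔltFbar : Δ ≤ Fbar t₁ := by rw [hΔdef]; linarith
  -- f is interval integrable on [0, t₂]
  have hf_int : IntervalIntegrable f volume 0 t₂ := by
    by_contra h
    have h2 : F t₂ = 0 := by rw [hF]; exact intervalIntegral.integral_undef h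
    have h1 : 0 ≤ F t₁ := by
      rw [hF]; exact intervalIntegral.integral_nonneg ht₁ (fun u _ => hf_nonneg u)
    linarith
  have hmem : ∀ x : ℝ, 0 ≤ x → x ≤ t₂ → x ∈ Set.uIcc (0:ℝ) t₂ := by
    intro x h1 h2; rw [Set.uIcc_of_le ht₂0]; exact ⟨h1, h2⟩
  have hf_sub : ∀ a b : ℝ, 0 ≤ a → a ≤ b → b ≤ t₂ → IntervalIntegrable f volume a b := by
    intro a b ha hab hb
    exact hf_int.mono_set
      (Set.uIcc_subset_uIcc (hmem a ha (hab.trans hb)) (hmem b (ha.trans hab) hb))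
  have hFdiff : ∀ a b : ℝ, 0 ≤ a → a ≤ b → b ≤ t₂ → F b - F a = ∫ s in a..b, f s := by
    intro a b ha hab hb
    rw [hF, hF,
      ← intervalIntegral.integral_add_adjacent_intervals
        (hf_sub 0 a le_rfl ha (hab.trans hb)) (hf_sub a b ha hab hb)]
    ring
  have hFmono : ∀ a b : ℝ, 0 ≤ a → a ≤ b → b ≤ t₂ → F a ≤ F b := by
    intro a b ha hab hb
    have h1 := hFdiff a b ha hab hb
    have h2 : 0 ≤ ∫ s in a..b, f s :=
      intervalIntegral.integral_nonneg hab (fun u _ => hf_nonneg u)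
    linarith
  have hFbar_anti : ∀ a b : ℝ, 0 ≤ a → a ≤ b → b ≤ t₂ → Fbar b ≤ Fbar a := by
    intro a b ha hab hb
    have := hFmono a b ha hab hb
    rw [hFbar, hFbar]; linarith
  have hFbar_ge : ∀ x : ℝ, t₁ ≤ x → x ≤ t₂ → Fbar t₂ ≤ Fbar x :=
    fun x h1 h2 => hFbar_anti x t₂ (ht₁.trans h1) h2 le_rfl
  have hFbarx_pos : ∀ x : ℝ, t₁ ≤ x → 0 < Fbar x := fun x h => hFbar_pos x (ht₁.trans h)
  -- continuity of F and Fbar on [0, t₂]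
  have hFcont : ContinuousOn F (Set.Icc 0 t₂) := by
    have h0 : IntegrableOn f (Set.uIcc 0 t₂) volume := by
      rw [Set.uIcc_of_le ht₂0]
      exact (intervalIntegrable_iff_integrableOn_Icc_of_le ht₂0).mp hf_int
    have h1 := intervalIntegral.continuousOn_primitive_interval (μ := volume) h0
    rw [Set.uIcc_of_le ht₂0] at h1
    have h2 : F = fun x => ∫ s in (0:ℝ)..x, f s := funext hF
    rw [h2]; exact h1
  have hFbar_cont : ContinuousOn Fbar (Set.Icc 0 t₂) := by
    have h2 : Fbar = fun x => 1 - F x := funext hFbar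
    rw [h2]; exact continuousOn_const.sub hFcont
  -- the function g = f / Fbar
  set g : ℝ → ℝ := fun s => f s / Fbar s with hgdef
  have hf_int12 : IntegrableOn f (Set.Ioc t₁ t₂) volume :=
    (intervalIntegrable_iff_integrableOn_Ioc_of_le ht.le).mp (hf_sub t₁ t₂ ht₁ ht.le le_rfl)
  have hIocIcc : Set.Ioc t₁ t₂ ⊆ Set.Icc 0 t₂ := fun x hx => ⟨ht₁.trans hx.1.le, hx.2⟩
  have hFbar_aesm : AEStronglyMeasurable Fbar (volume.restrict (Set.Ioc t₁ t₂)) :=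
    (hFbar_cont.aestronglyMeasurable measurableSet_Icc).mono_measure
      (Measure.restrict_mono hIocIcc le_rfl)
  have hg_aesm : AEStronglyMeasurable g (volume.restrict (Set.Ioc t₁ t₂)) :=
    (hf_meas.aemeasurable.div hFbar_aesm.aemeasurable).aestronglyMeasurable
  have hg_intOn : IntegrableOn g (Set.Ioc t₁ t₂) volume := by
    refine Integrable.mono' (hf_int12.div_const (Fbar t₂)) hg_aesm ?_
    filter_upwards [ae_restrict_mem measurableSet_Ioc] with s hs
    have h1 : 0 < Fbar s := hFbarx_pos s hs.1.le
    have h2 : Fbar t₂ ≤ Fbar s := hFbar_ge s hs.1.le hs.2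
    rw [Real.norm_eq_abs, abs_of_nonneg (div_nonneg (hf_nonneg s) h1.le)]
    exact div_le_div_of_nonneg_left (hf_nonneg s) hc h2
  have hg_sub : ∀ a b : ℝ, t₁ ≤ a → a ≤ b → b ≤ t₂ → IntervalIntegrable g volume a b := by
    intro a b ha hab hb
    rw [intervalIntegrable_iff_integrableOn_Ioc_of_le hab]
    exact hg_intOn.mono_set (Set.Ioc_subset_Ioc ha hb)
  have hg_nonneg : ∀ s, t₁ ≤ s → 0 ≤ g s :=
    fun s hs => div_nonneg (hf_nonneg s) (hFbarx_pos s hs).le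
  -- key log inequality, by dyadic bisection
  have keyN : ∀ n : ℕ, ∀ a b : ℝ, t₁ ≤ a → a ≤ b → b ≤ t₂ →
      Real.log (Fbar a) - Real.log (Fbar b) - ∫ s in a..b, g s
        ≤ (F b - F a)^2 / (2^n * (Fbar t₂)^2) := by
    intro n
    induction n with
    | zero =>
      intro a b ha hab hb
      have hfa : 0 < Fbar a := hFbarx_pos a ha
      have hfb : 0 < Fbar b := hFbarx_pos b (ha.trans hab)
      have h0a : 0 ≤ a := ht₁.trans ha
      have hba : Fbar b ≤ Fbar a := hFbar_anti a b h0a hab hb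
      have hca : Fbar t₂ ≤ Fbar a := hFbar_ge a ha (hab.trans hb)
      have hcb : Fbar t₂ ≤ Fbar b := hFbar_ge b (ha.trans hab) hb
      have hFab : F b - F a = ∫ s in a..b, f s := hFdiff a b h0a hab hb
      have hFabnn : 0 ≤ F b - F a := by
        rw [hFab]; exact intervalIntegral.integral_nonneg hab fun u _ => hf_nonneg u
      have hlog : Real.log (Fbar a) - Real.log (Fbar b) ≤ (Fbar a - Fbar b) / Fbar b := by
        have h1 := Real.log_le_sub_one_of_pos (div_pos hfa hfb)
        rw [Real.log_div hfa.ne' hfb.ne'] at h1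
        have h2 : Fbar a / Fbar b - 1 = (Fbar a - Fbar b) / Fbar b := by field_simp
        linarith
      have hint : (F b - F a) / Fbar a ≤ ∫ s in a..b, g s := by
        rw [hFab, ← intervalIntegral.integral_div]
        refine intervalIntegral.integral_mono_on hab
          ((hf_sub a b h0a hab hb).div_const _) (hg_sub a b ha hab hb) ?_
        intro s hs
        have h1 : 0 < Fbar s := hFbarx_pos s (ha.trans hs.1)
        have h2 : Fbar s ≤ Fbar a := hFbar_anti a s h0a hs.1 (hs.2.trans hb)
        simp only [hgdef]
        exact div_le_div_of_nonneg_left (hf_nonneg s) h1 h2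
      have hab2 : Fbar a - Fbar b = F b - F a := by rw [hFbar, hFbar]; ring
      have heq : (F b - F a) / Fbar b - (F b - F a) / Fbar a
          = (F b - F a)^2 / (Fbar a * Fbar b) := by
        field_simp
        linear_combination (F b - F a) * hab2
      have hfinal : (F b - F a)^2 / (Fbar a * Fbar b)
          ≤ (F b - F a)^2 / (2^0 * (Fbar t₂)^2) := by
        rw [pow_zero, one_mul]
        exact div_le_div_of_nonneg_left (sq_nonneg _) (by positivity) (by nlinarith)
      rw [hab2] at hlog
      linarith
    | succ n ih =>
      intro a b ha hab hb
      have h0a : 0 ≤ a := ht₁.trans ha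
      have hFab_le : F a ≤ F b := hFmono a b h0a hab hb
      obtain ⟨m, hm_mem, hm⟩ : ∃ m ∈ Set.Icc a b, F m = (F a + F b) / 2 := by
        have hIcc : Set.Icc a b ⊆ Set.Icc 0 t₂ := fun x hx => ⟨h0a.trans hx.1, hx.2.trans hb⟩
        have h1 := intermediate_value_Icc hab (hFcont.mono hIcc)
        have h2 : (F a + F b) / 2 ∈ Set.Icc (F a) (F b) := by
          constructor <;> linarith
        obtain ⟨m, hm1, hm2⟩ := h1 h2
        exact ⟨m, hm1, hm2⟩
      have ham : t₁ ≤ m := ha.trans hm_mem.1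
      have hmb : m ≤ t₂ := hm_mem.2.trans hb
      have hsplit : ∫ s in a..b, g s = (∫ s in a..m, g s) + ∫ s in m..b, g s :=
        (intervalIntegral.integral_add_adjacent_intervals
          (hg_sub a m ha hm_mem.1 hmb) (hg_sub m b ham hm_mem.2 hb)).symm
      have h1 := ih a m ha hm_mem.1 hmb
      have h2 := ih m b ham hm_mem.2 hb
      have e1 : F m - F a = (F b - F a) / 2 := by rw [hm]; ring
      have e2 : F b - F m = (F b - F a) / 2 := by rw [hm]; ring
      rw [e1] at h1; rw [e2] at h2
      have h2n : (0:ℝ) < 2^n := by positivity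
      have heq : ((F b - F a) / 2)^2 / (2^n * (Fbar t₂)^2) * 2
          = (F b - F a)^2 / (2^(n+1) * (Fbar t₂)^2) := by
        rw [pow_succ]
        field_simp
        ring
      rw [hsplit]
      linarith
  have key : ∀ a b : ℝ, t₁ ≤ a → a ≤ b → b ≤ t₂ →
      Real.log (Fbar a) - Real.log (Fbar b) ≤ ∫ s in a..b, g s := by
    intro a b ha hab hb
    have hD : ∀ n : ℕ, Real.log (Fbar a) - Real.log (Fbar b) - ∫ s in a..b, g s
        ≤ (F b - F a)^2 / (Fbar t₂)^2 / 2^n := by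
      intro n
      have := keyN n a b ha hab hb
      have heq : (F b - F a)^2 / (2^n * (Fbar t₂)^2)
          = (F b - F a)^2 / (Fbar t₂)^2 / 2^n := by
        rw [div_div]
        ring_nf
      linarith [this, heq.ge]
    have hlim : Filter.Tendsto (fun n : ℕ => (F b - F a)^2 / (Fbar t₂)^2 / 2^n)
        Filter.atTop (nhds 0) := by
      apply Filter.Tendsto.div_atTop tendsto_const_nhds
      exact tendsto_pow_atTop_atTop_of_one_lt one_lt_two
    have := ge_of_tendsto' hlim hD
    linarith
  -- the weight function w
  set w : ℝ → ℝ := fun y => φ y * Fbar y with hwdef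
  have hw_nonneg : ∀ y, 0 ≤ y → 0 ≤ w y :=
    fun y hy => mul_nonneg (hφ_nonneg y) (hFbar_pos y hy).le
  have hw_int : IntegrableOn w (Set.Ioc t₁ t₂) volume :=
    (hi3 t₁ ht₁).mono_set Set.Ioc_subset_Ioi_self
  -- the primitive J of g
  set J : ℝ → ℝ := fun y => ∫ s in t₁..y, g s with hJdef
  -- the tail integral K
  set K : ℝ → ℝ := fun x => ∫ y in x..t₂, w y with hKdef
  -- basic facts about J
  have hJ_nonneg : ∀ y ∈ Set.Icc t₁ t₂, 0 ≤ J y := by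
    intro y hy
    exact intervalIntegral.integral_nonneg hy.1 (fun s hs => hg_nonneg s hs.1)
  have hJ_le : ∀ y ∈ Set.Icc t₁ t₂, J y ≤ J t₂ := by
    intro y hy
    have hsplit := intervalIntegral.integral_add_adjacent_intervals
      (hg_sub t₁ y le_rfl hy.1 hy.2) (hg_sub y t₂ hy.1 hy.2 le_rfl)
    have h2 : 0 ≤ ∫ s in y..t₂, g s :=
      intervalIntegral.integral_nonneg hy.2 (fun s hs => hg_nonneg s (hy.1.trans hs.1))
    simp only [hJdef]
    linarith [hsplit]
  have hJ_cont : ContinuousOn J (Set.Icc t₁ t₂) := by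
    have h := intervalIntegral.continuousOn_primitive_interval'
      (hg_sub t₁ t₂ le_rfl ht.le le_rfl) Set.left_mem_uIcc
    rwa [Set.uIcc_of_le ht.le] at h
  -- facts about K
  have hw_ii : IntervalIntegrable w volume t₁ t₂ :=
    (intervalIntegrable_iff_integrableOn_Ioc_of_le ht.le).mpr hw_int
  have hK_cont : ContinuousOn K (Set.Icc t₁ t₂) := by
    have h0 : IntegrableOn w (Set.uIcc t₁ t₂) volume := by
      rw [Set.uIcc_of_le ht.le]
      exact (intervalIntegrable_iff_integrableOn_Icc_of_le ht.le).mp hw_ii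
    have h := intervalIntegral.continuousOn_primitive_interval_left (μ := volume) h0
    rwa [Set.uIcc_of_le ht.le] at h
  set C₀ : ℝ := ∫ y in Set.Ioi t₁, w y with hC₀
  have hw_ae_nonneg : ∀ x : ℝ, 0 ≤ x → 0 ≤ᵐ[volume.restrict (Set.Ioi x)] w := by
    intro x hx
    filter_upwards [ae_restrict_mem measurableSet_Ioi] with y hy
    exact hw_nonneg y (hx.trans hy.le)
  have hK_eq : ∀ x ∈ Set.Ioc t₁ t₂, K x = ∫ y in Set.Ioc x t₂, w y := by
    intro x hx
    simp only [hKdef]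
    rw [intervalIntegral.integral_of_le hx.2]
  have hK_le_tail : ∀ x ∈ Set.Ioc t₁ t₂, K x ≤ ∫ y in Set.Ioi x, w y := by
    intro x hx
    rw [hK_eq x hx]
    exact setIntegral_mono_set (hi3 x (ht₁.trans hx.1.le)) (hw_ae_nonneg x (ht₁.trans hx.1.le))
      (HasSubset.Subset.eventuallyLE Set.Ioc_subset_Ioi_self)
  have hK_le_C₀ : ∀ x ∈ Set.Ioc t₁ t₂, K x ≤ C₀ := by
    intro x hx
    rw [hK_eq x hx]
    exact setIntegral_mono_set (hi3 t₁ ht₁) (hw_ae_nonneg t₁ ht₁)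
      (HasSubset.Subset.eventuallyLE (fun y hy => hx.1.trans hy.1))
  have hK_nonneg : ∀ x ∈ Set.Ioc t₁ t₂, 0 ≤ K x := by
    intro x hx
    rw [hK_eq x hx]
    exact setIntegral_nonneg measurableSet_Ioc
      (fun y hy => hw_nonneg y ((ht₁.trans hx.1.le).trans hy.1.le))
  -- Fubini on the triangle
  set u : ℝ → ℝ → ℝ := fun y x => if x ≤ y then w y * g x else 0 with hudef
  have hu_int : Integrable (Function.uncurry u)
      ((volume.restrict (Set.Ioc t₁ t₂)).prod (volume.restrict (Set.Ioc t₁ t₂))) := by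
    have h1 : Integrable (fun p : ℝ × ℝ => w p.1 * g p.2)
        ((volume.restrict (Set.Ioc t₁ t₂)).prod (volume.restrict (Set.Ioc t₁ t₂))) :=
      Integrable.mul_prod hw_int hg_intOn
    have h2 : Function.uncurry u = Set.indicator {p : ℝ × ℝ | p.2 ≤ p.1}
        (fun p => w p.1 * g p.2) := by
      ext p
      by_cases h : p.2 ≤ p.1 <;>
        simp [Function.uncurry, hudef, Set.indicator_apply, Set.mem_setOf_eq, h]
    rw [h2]
    exact h1.indicator (measurableSet_le measurable_snd measurable_fst)
  have hswap := MeasureTheory.integral_integral_swap hu_int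
  have hinner1 : ∀ y ∈ Set.Ioc t₁ t₂, (∫ x in Set.Ioc t₁ t₂, u y x) = w y * J y := by
    intro y hy
    have he : (fun x => u y x) = Set.indicator (Set.Iic y) (fun x => w y * g x) := by
      ext x
      by_cases h : x ≤ y <;> simp [hudef, Set.indicator_apply, Set.mem_Iic, h]
    rw [he, MeasureTheory.integral_indicator measurableSet_Iic,
      Measure.restrict_restrict measurableSet_Iic]
    have hset : Set.Iic y ∩ Set.Ioc t₁ t₂ = Set.Ioc t₁ y := by
      ext x
      simp only [Set.mem_inter_iff, Set.mem_Iic, Set.mem_Ioc]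
      exact ⟨fun h => ⟨h.2.1, h.1⟩, fun h => ⟨h.2, h.1, h.2.trans hy.2⟩⟩
    rw [hset, MeasureTheory.integral_const_mul]
    congr 1
    simp only [hJdef]
    exact (intervalIntegral.integral_of_le hy.1.le).symm
  have hinner2 : ∀ x ∈ Set.Ioc t₁ t₂, (∫ y in Set.Ioc t₁ t₂, u y x) = g x * K x := by
    intro x hx
    have he : (fun y => u y x) = Set.indicator (Set.Ici x) (fun y => w y * g x) := by
      ext y
      by_cases h : x ≤ y <;> simp [hudef, Set.indicator_apply, Set.mem_Ici, h]
    rw [he, MeasureTheory.integral_indicator measurableSet_Ici,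
      Measure.restrict_restrict measurableSet_Ici]
    have hset : Set.Ici x ∩ Set.Ioc t₁ t₂ = Set.Icc x t₂ := by
      ext y
      simp only [Set.mem_inter_iff, Set.mem_Ici, Set.mem_Ioc, Set.mem_Icc]
      exact ⟨fun h => ⟨h.1, h.2.2⟩, fun h => ⟨h.1, hx.1.trans_le h.1, h.2⟩⟩
    rw [hset, MeasureTheory.integral_mul_const, MeasureTheory.integral_Icc_eq_integral_Ioc,
      hK_eq x hx]
    exact mul_comm _ _
  have hFubini : (∫ y in Set.Ioc t₁ t₂, w y * J y) = ∫ x in Set.Ioc t₁ t₂, g x * K x := by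
    calc (∫ y in Set.Ioc t₁ t₂, w y * J y)
        = ∫ y in Set.Ioc t₁ t₂, ∫ x in Set.Ioc t₁ t₂, u y x :=
          setIntegral_congr_fun measurableSet_Ioc (fun y hy => (hinner1 y hy).symm)
      _ = ∫ x in Set.Ioc t₁ t₂, ∫ y in Set.Ioc t₁ t₂, u y x := hswap
      _ = ∫ x in Set.Ioc t₁ t₂, g x * K x :=
          setIntegral_congr_fun measurableSet_Ioc (fun x hx => hinner2 x hx)
  -- integrability of w * J and g * K
  have hJ_aesm : AEStronglyMeasurable J (volume.restrict (Set.Ioc t₁ t₂)) :=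
    (hJ_cont.aestronglyMeasurable measurableSet_Icc).mono_measure
      (Measure.restrict_mono Set.Ioc_subset_Icc_self le_rfl)
  have hwJ_int : IntegrableOn (fun y => w y * J y) (Set.Ioc t₁ t₂) volume := by
    refine Integrable.mono' (hw_int.mul_const (J t₂))
      (hw_int.aestronglyMeasurable.mul hJ_aesm) ?_
    filter_upwards [ae_restrict_mem measurableSet_Ioc] with y hy
    have h0y : 0 ≤ y := ht₁.trans hy.1.le
    have h1 := hJ_nonneg y ⟨hy.1.le, hy.2⟩
    have h2 := hJ_le y ⟨hy.1.le, hy.2⟩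
    rw [Real.norm_eq_abs, abs_of_nonneg (mul_nonneg (hw_nonneg y h0y) h1)]
    exact mul_le_mul_of_nonneg_left h2 (hw_nonneg y h0y)
  have hK_aesm : AEStronglyMeasurable K (volume.restrict (Set.Ioc t₁ t₂)) :=
    (hK_cont.aestronglyMeasurable measurableSet_Icc).mono_measure
      (Measure.restrict_mono Set.Ioc_subset_Icc_self le_rfl)
  have hgK_int : IntegrableOn (fun x => g x * K x) (Set.Ioc t₁ t₂) volume := by
    refine Integrable.mono' (hg_intOn.mul_const C₀) (hg_aesm.mul hK_aesm) ?_
    filter_upwards [ae_restrict_mem measurableSet_Ioc] with x hx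
    have h1 := hK_nonneg x hx
    have h2 := hK_le_C₀ x hx
    have h3 := hg_nonneg x hx.1.le
    rw [Real.norm_eq_abs, abs_of_nonneg (mul_nonneg h3 h1)]
    exact mul_le_mul_of_nonneg_left h2 h3
  have hηf_int : IntegrableOn (fun x => ηbar x * f x) (Set.Ioc t₁ t₂) volume :=
    (intervalIntegrable_iff_integrableOn_Ioc_of_le ht.le).mp hi2
  -- pointwise comparison on Ioc
  have hpoint : ∀ x ∈ Set.Ioc t₁ t₂, g x * K x ≤ ηbar x * f x := by
    intro x hx
    have h0x : 0 ≤ x := ht₁.trans hx.1.le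
    have hT : K x ≤ ∫ y in Set.Ioi x, w y := hK_le_tail x hx
    have he : ηbar x * f x = g x * ∫ y in Set.Ioi x, w y := by
      rw [hηbar x h0x]
      simp only [hgdef, hwdef]
      ring
    rw [he]
    exact mul_le_mul_of_nonneg_left hT (hg_nonneg x hx.1.le)
  -- integrability of the transformed left integrand
  have hleft_int : IntervalIntegrable
      (fun x => φ x * Fbar x * (Real.log Δ - Real.log (Fbar x))) volume t₁ t₂ := by
    have h1 : IntervalIntegrable
        (fun x => -(Δ * (φ x * (Fbar x / Δ) * Real.log (Fbar x / Δ)))) volume t₁ t₂ :=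
      (hi1.const_mul Δ).neg
    rw [intervalIntegrable_iff_integrableOn_Ioc_of_le ht.le] at h1 ⊢
    refine h1.congr ?_
    filter_upwards [ae_restrict_mem measurableSet_Ioc] with x hx
    have hx0 : 0 < Fbar x := hFbarx_pos x hx.1.le
    rw [Real.log_div hx0.ne' hΔpos.ne']
    field_simp
    ring
  -- pointwise bound for the interval comparison
  have hpt2 : ∀ x ∈ Set.Icc t₁ t₂,
      φ x * Fbar x * (Real.log Δ - Real.log (Fbar x)) ≤ w x * J x := by
    intro x hx
    have hkey := key t₁ x le_rfl hx.1 hx.2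
    have hlogΔ : Real.log Δ ≤ Real.log (Fbar t₁) := Real.log_le_log hΔpos hΔltFbar
    have hwx : 0 ≤ w x := hw_nonneg x (ht₁.trans hx.1)
    have hlog2 : Real.log Δ - Real.log (Fbar x) ≤ J x := by
      simp only [hJdef]; linarith
    calc φ x * Fbar x * (Real.log Δ - Real.log (Fbar x))
        = w x * (Real.log Δ - Real.log (Fbar x)) := by simp only [hwdef]
      _ ≤ w x * J x := mul_le_mul_of_nonneg_left hlog2 hwx
  have hwJ_ii : IntervalIntegrable (fun y => w y * J y) volume t₁ t₂ :=
    (intervalIntegrable_iff_integrableOn_Ioc_of_le ht.le).mpr hwJ_int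
  have hC2_le : (∫ x in t₁..t₂, φ x * Fbar x * (Real.log Δ - Real.log (Fbar x)))
      ≤ ∫ y in t₁..t₂, w y * J y :=
    intervalIntegral.integral_mono_on ht.le hleft_int hwJ_ii hpt2
  have hB_eq : (∫ y in t₁..t₂, w y * J y) = ∫ y in Set.Ioc t₁ t₂, w y * J y :=
    intervalIntegral.integral_of_le ht.le
  have hR_eq : (∫ x in t₁..t₂, ηbar x * f x) = ∫ x in Set.Ioc t₁ t₂, ηbar x * f x :=
    intervalIntegral.integral_of_le ht.le
  have hfinal : (∫ x in t₁..t₂, φ x * Fbar x * (Real.log Δ - Real.log (Fbar x)))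
      ≤ ∫ x in t₁..t₂, ηbar x * f x := by
    calc (∫ x in t₁..t₂, φ x * Fbar x * (Real.log Δ - Real.log (Fbar x)))
        ≤ ∫ y in t₁..t₂, w y * J y := hC2_le
      _ = ∫ y in Set.Ioc t₁ t₂, w y * J y := hB_eq
      _ = ∫ x in Set.Ioc t₁ t₂, g x * K x := hFubini
      _ ≤ ∫ x in Set.Ioc t₁ t₂, ηbar x * f x :=
          setIntegral_mono_on hgK_int hηf_int measurableSet_Ioc hpoint
      _ = ∫ x in t₁..t₂, ηbar x * f x := hR_eq.symm
  -- rewrite the original integral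
  have horig : (∫ x in t₁..t₂, φ x * (Fbar x / Δ) * Real.log (Fbar x / Δ))
      = (1/Δ) * ∫ x in t₁..t₂, φ x * Fbar x * (Real.log (Fbar x) - Real.log Δ) := by
    rw [← intervalIntegral.integral_const_mul]
    apply intervalIntegral.integral_congr
    intro x hx
    rw [Set.uIcc_of_le ht.le] at hx
    have hx0 : 0 < Fbar x := hFbarx_pos x hx.1
    show φ x * (Fbar x / Δ) * Real.log (Fbar x / Δ)
      = 1/Δ * (φ x * Fbar x * (Real.log (Fbar x) - Real.log Δ))
    rw [Real.log_div hx0.ne' hΔpos.ne']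
    field_simp
  have hneg : -(∫ x in t₁..t₂, φ x * Fbar x * (Real.log (Fbar x) - Real.log Δ))
      = ∫ x in t₁..t₂, φ x * Fbar x * (Real.log Δ - Real.log (Fbar x)) := by
    rw [← intervalIntegral.integral_neg]
    apply intervalIntegral.integral_congr
    intro x hx
    ring
  rw [horig, ← hΔeq]
  have h1 : -(1/Δ * ∫ x in t₁..t₂, φ x * Fbar x * (Real.log (Fbar x) - Real.log Δ))
      = (-(∫ x in t₁..t₂, φ x * Fbar x * (Real.log (Fbar x) - Real.log Δ))) / Δ := by
    ring
  rw [h1, hneg]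
  exact div_le_div_of_nonneg_right hfinal hΔpos.le
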